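/- Let a ≥ 1 and b ≥ 1 be integers and let G be a finite simple (a,b)-graph, i.e., every subgraph H of G satisfies |E(H)| ≤ a·|V(H)| − b. Then χ'_s(G) ≤ (4a − 2)·χ'(G), where χ'_s(G) is the strong chromatic index and χ'(G) is the chromatic index of G. -/

import Mathlib

/-- Two edges of `G` are at distance at most 2: they share a vertex, or some
edge of `G` shares a vertex with each of them. -/
def NearEdges {V : Type*} (G : SimpleGraph V) (e f : Sym2 V) : Prop :=
  (∃ v, v ∈ e ∧ v ∈ f) ∨ ∃ g ∈ G.edgeSet, (∃ v, v ∈ e ∧ v ∈ g) ∧ (∃ v, v ∈ g ∧ v ∈ f)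

/-- A proper edge coloring of `G`: any two distinct adjacent edges receive
distinct colors. -/
def IsProperEdgeColoring {V : Type*} (G : SimpleGraph V) (c : Sym2 V → ℕ) : Prop :=
  ∀ e ∈ G.edgeSet, ∀ f ∈ G.edgeSet, e ≠ f → (∃ v, v ∈ e ∧ v ∈ f) → c e ≠ c f

/-- A strong edge coloring of `G`: any two distinct edges at distance at most 2
receive distinct colors. -/
def IsStrongEdgeColoring {V : Type*} (G : SimpleGraph V) (c : Sym2 V → ℕ) : Prop :=
  ∀ e ∈ G.edgeSet, ∀ f ∈ G.edgeSet, e ≠ f → NearEdges G e f → c e ≠ c f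

/-- The chromatic index `χ'(G)`: the least `k` such that `G` admits a proper
edge coloring using colors `{0, …, k−1}`. -/
noncomputable def chromIndex {V : Type*} (G : SimpleGraph V) : ℕ :=
  sInf {k : ℕ | ∃ c : Sym2 V → ℕ, (∀ e ∈ G.edgeSet, c e < k) ∧ IsProperEdgeColoring G c}

/-- The strong chromatic index `χ'ₛ(G)`: the least `k` such that `G` admits a
strong edge coloring using colors `{0, …, k−1}`. -/
noncomputable def strongChromIndex {V : Type*} (G : SimpleGraph V) : ℕ :=
  sInf {k : ℕ | ∃ c : Sym2 V → ℕ, (∀ e ∈ G.edgeSet, c e < k) ∧ IsStrongEdgeColoring G c}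



open Classical in
lemma greedy {α : Type*} [DecidableEq α] (R : α → α → Prop) (hsym : ∀ x y, R x y → R y x) (d : ℕ) :
    ∀ S : Finset α, (∀ T ⊆ S, T.Nonempty →
      ∃ x ∈ T, ∀ N ⊆ T.erase x, (∀ y ∈ N, R x y) → N.card ≤ d) →
    ∃ c : α → ℕ, (∀ x ∈ S, c x < d + 1) ∧ ∀ x ∈ S, ∀ y ∈ S, x ≠ y → R x y → c x ≠ c y := by
  classical
  intro S
  induction S using Finset.strongInduction with
  | _ S ih =>
    intro hdeg
    rcases S.eq_empty_or_nonempty with rfl | hS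
    · exact ⟨fun _ => 0, by simp, by simp⟩
    obtain ⟨x, hxS, hxdeg'⟩ := hdeg S (le_refl _) hS
    have hxdeg : ((S.erase x).filter (R x)).card ≤ d :=
      hxdeg' _ (Finset.filter_subset _ _) (fun y hy => (Finset.mem_filter.mp hy).2)
    obtain ⟨c, hc1, hc2⟩ := ih (S.erase x) (Finset.erase_ssubset hxS)
      (fun T hT hTne => hdeg T (hT.trans (Finset.erase_subset _ _)) hTne)
    set N := ((S.erase x).filter (R x)) with hN
    have himg : (N.image c).card ≤ d := le_trans (Finset.card_image_le) hxdeg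
    have : ∃ j ∈ Finset.range (d+1), j ∉ N.image c := by
      by_contra h
      push_neg at h
      have hsub : Finset.range (d+1) ⊆ N.image c := fun j hj => h j hj
      have := Finset.card_le_card hsub
      simp only [Finset.card_range] at this
      omega
    obtain ⟨j, hj, hjnot⟩ := this
    refine ⟨Function.update c x j, ?_, ?_⟩
    · intro y hy
      by_cases hyx : y = x
      · subst hyx; simp [Function.update_self]; exact Nat.lt_succ_iff.mp (Finset.mem_range.mp hj)
      · rw [Function.update_of_ne hyx]
        exact hc1 y (Finset.mem_erase.mpr ⟨hyx, hy⟩)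
    · intro y hy z hz hyz hR
      by_cases hyx : y = x
      · have hzx : z ≠ x := fun h => hyz (hyx.trans h.symm)
        rw [hyx, Function.update_self, Function.update_of_ne hzx]
        intro hEq
        exact hjnot (hEq ▸ Finset.mem_image_of_mem c
          (Finset.mem_filter.mpr ⟨Finset.mem_erase.mpr ⟨hzx, hz⟩, hyx ▸ hR⟩))
      · by_cases hzx : z = x
        · rw [hzx, Function.update_of_ne hyx, Function.update_self]
          intro hEq
          exact hjnot (hEq.symm ▸ Finset.mem_image_of_mem c
            (Finset.mem_filter.mpr ⟨Finset.mem_erase.mpr ⟨hyx, hy⟩, hsym _ _ (hzx ▸ hR)⟩))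
        · rw [Function.update_of_ne hyx, Function.update_of_ne hzx]
          exact hc2 y (Finset.mem_erase.mpr ⟨hyx, hy⟩) z (Finset.mem_erase.mpr ⟨hzx, hz⟩) hyz hR

lemma nearEdges_symm {V : Type*} (G : SimpleGraph V) {e f : Sym2 V}
    (h : NearEdges G e f) : NearEdges G f e := by
  rcases h with ⟨v, h1, h2⟩ | ⟨g, hg, ⟨u, hu1, hu2⟩, ⟨v, hv1, hv2⟩⟩
  · exact Or.inl ⟨v, h2, h1⟩
  · exact Or.inr ⟨g, hg, ⟨v, hv2, hv1⟩, ⟨u, hu2, hu1⟩⟩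

open Classical in
lemma count_lemma {V : Type*} [Fintype V] (G : SimpleGraph V) (a b : ℕ)
    (ha : 1 ≤ a) (hb : 1 ≤ b)
    (hG : ∀ H : G.Subgraph, H.verts.Nonempty →
      (H.edgeSet.ncard : ℤ) ≤ (a : ℤ) * (H.verts.ncard : ℤ) - (b : ℤ))
    (T : Finset (Sym2 V)) (hTE : ∀ e ∈ T, e ∈ G.edgeSet)
    (hmatch : ∀ e ∈ T, ∀ f ∈ T, e ≠ f → ∀ v, ¬(v ∈ e ∧ v ∈ f))
    (hne : T.Nonempty) :
    ∃ e ∈ T, ((T.erase e).filter (fun f => NearEdges G e f)).card ≤ 4*a - 3 := by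
  classical
  by_contra hcon
  push_neg at hcon
  have hdeg : ∀ e ∈ T, 4*a - 2 ≤ ((T.erase e).filter (fun f => NearEdges G e f)).card := by
    intro e he
    have := hcon e he
    omega
  -- ordered conflict pairs
  set D : Finset (Sym2 V × Sym2 V) :=
    (T ×ˢ T).filter (fun p => p.1 ≠ p.2 ∧ NearEdges G p.1 p.2) with hD
  -- card of D = sum of degrees
  have hDfst : ∀ p ∈ D, p.1 ∈ T := by
    intro p hp
    exact (Finset.mem_product.mp (Finset.mem_filter.mp hp).1).1
  have hDcard : D.card = ∑ e ∈ T, ((T.erase e).filter (fun f => NearEdges G e f)).card := by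
    rw [Finset.card_eq_sum_card_fiberwise hDfst]
    refine Finset.sum_congr rfl (fun e he => ?_)
    refine Finset.card_bij (fun p _ => p.2) ?_ ?_ ?_
    · intro p hp
      simp only [Finset.mem_filter] at hp ⊢
      obtain ⟨hp1, hp2⟩ := hp
      rw [hD, Finset.mem_filter, Finset.mem_product] at hp1
      subst hp2
      exact ⟨Finset.mem_erase.mpr ⟨fun h => hp1.2.1 h.symm, hp1.1.2⟩, hp1.2.2⟩
    · intro p hp q hq hpq
      simp only [Finset.mem_filter] at hp hq
      exact Prod.ext (hp.2.trans hq.2.symm) hpq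
    · intro f hf
      simp only [Finset.mem_filter, Finset.mem_erase] at hf
      refine ⟨(e, f), ?_, rfl⟩
      simp only [Finset.mem_filter]
      refine ⟨?_, trivial⟩
      rw [hD, Finset.mem_filter, Finset.mem_product]
      exact ⟨⟨he, hf.1.2⟩, fun h => hf.1.1 h.symm, hf.2⟩
  have hDlb : (4*a-2) * T.card ≤ D.card := by
    rw [hDcard]
    calc (4*a-2) * T.card = ∑ _e ∈ T, (4*a-2) := by simp [Finset.sum_const, mul_comm]
    _ ≤ _ := Finset.sum_le_sum hdeg
  -- matching edges are pairwise vertex-disjoint; extract a middle edge for each pair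
  have hmid : ∀ p ∈ D, ∃ g, g ∈ G.edgeSet ∧ (∃ v, v ∈ p.1 ∧ v ∈ g) ∧ (∃ v, v ∈ g ∧ v ∈ p.2) := by
    intro p hp
    rw [hD, Finset.mem_filter, Finset.mem_product] at hp
    obtain ⟨⟨h1, h2⟩, hne12, hnear⟩ := hp
    rcases hnear with ⟨v, hv1, hv2⟩ | ⟨g, hg, hg1, hg2⟩
    · exact absurd ⟨hv1, hv2⟩ (hmatch _ h1 _ h2 hne12 v)
    · exact ⟨g, hg, hg1, hg2⟩
  -- witness function
  set w : Sym2 V × Sym2 V → Sym2 V := fun p =>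
    if h : ∃ g, g ∈ G.edgeSet ∧ (∃ v, v ∈ p.1 ∧ v ∈ g) ∧ (∃ v, v ∈ g ∧ v ∈ p.2)
    then h.choose else p.1 with hw
  have hwspec : ∀ p ∈ D, w p ∈ G.edgeSet ∧ (∃ v, v ∈ p.1 ∧ v ∈ w p) ∧ (∃ v, v ∈ w p ∧ v ∈ p.2) := by
    intro p hp
    have h := hmid p hp
    rw [hw]
    simp only [dif_pos h]
    exact h.choose_spec
  set W : Finset (Sym2 V) := D.image w with hW
  -- each fiber of w on D has at most 2 elements
  have hDmem : ∀ p ∈ D, p.1 ∈ T ∧ p.2 ∈ T ∧ p.1 ≠ p.2 := by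
    intro p hp
    rw [hD, Finset.mem_filter, Finset.mem_product] at hp
    exact ⟨hp.1.1, hp.1.2, hp.2.1⟩
  -- key: in a matching, a vertex is in at most one edge
  have huniq : ∀ v : V, ∀ e ∈ T, ∀ f ∈ T, v ∈ e → v ∈ f → e = f := by
    intro v e he f hf hve hvf
    by_contra hef
    exact hmatch e he f hf hef v ⟨hve, hvf⟩
  have hfiber : ∀ g ∈ W, (D.filter (fun p => w p = g)).card ≤ 2 := by
    intro g hgW
    obtain ⟨p₀, hp₀D, hp₀g⟩ := Finset.mem_image.mp hgW
    have hsub : D.filter (fun p => w p = g) ⊆ {p₀, p₀.swap} := by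
      intro q hq
      rw [Finset.mem_filter] at hq
      obtain ⟨hqD, hqg⟩ := hq
      obtain ⟨hg0, ⟨u₀, hu₀1, hu₀g⟩, ⟨v₀, hv₀g, hv₀2⟩⟩ := hwspec p₀ hp₀D
      obtain ⟨_, ⟨u₁, hu₁1, hu₁g⟩, ⟨v₁, hv₁g, hv₁2⟩⟩ := hwspec q hqD
      rw [hp₀g] at hu₀g hv₀g
      rw [hqg] at hu₁g hv₁g
      obtain ⟨e₀, f₀, hne₀⟩ := hDmem p₀ hp₀D
      obtain ⟨e₁, f₁, hne₁⟩ := hDmem q hqD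
      -- u₀ ≠ v₀ since p₀.1, p₀.2 disjoint
      have hu₀v₀ : u₀ ≠ v₀ := fun h => hmatch _ e₀ _ f₀ hne₀ u₀ ⟨hu₀1, h ▸ hv₀2⟩
      -- g has two elements u₀, v₀; any member of g is u₀ or v₀
      induction g using Sym2.ind with
      | _ x y =>
        rw [Sym2.mem_iff] at hu₀g hv₀g hu₁g hv₁g
        have hxy : x ≠ y := (G.mem_edgeSet.mp (hp₀g ▸ hg0)).ne
        have hcases : (u₁ = u₀ ∧ v₁ = v₀) ∨ (u₁ = v₀ ∧ v₁ = u₀) := by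
          rcases hu₀g with h1 | h1 <;> rcases hv₀g with h2 | h2 <;>
            rcases hu₁g with h3 | h3 <;> rcases hv₁g with h4 | h4 <;>
            first
              | (exact absurd (h1.trans h2.symm) hu₀v₀)
              | (left; exact ⟨h3.trans h1.symm, h4.trans h2.symm⟩)
              | (right; exact ⟨h3.trans h2.symm, h4.trans h1.symm⟩)
              | (exact absurd (h3.trans h4.symm) (by
                  intro hc
                  exact hmatch _ e₁ _ f₁ hne₁ u₁ ⟨hu₁1, hc ▸ hv₁2⟩))
        rcases hcases with ⟨h3, h4⟩ | ⟨h3, h4⟩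
        · have hq1 : q.1 = p₀.1 := huniq u₀ _ e₁ _ e₀ (h3 ▸ hu₁1) hu₀1
          have hq2 : q.2 = p₀.2 := huniq v₀ _ f₁ _ f₀ (h4 ▸ hv₁2) hv₀2
          exact Finset.mem_insert.mpr (Or.inl (Prod.ext hq1 hq2))
        · have hq1 : q.1 = p₀.2 := huniq v₀ _ e₁ _ f₀ (h3 ▸ hu₁1) hv₀2
          have hq2 : q.2 = p₀.1 := huniq u₀ _ f₁ _ e₀ (h4 ▸ hv₁2) hu₀1
          refine Finset.mem_insert.mpr (Or.inr ?_)
          simp only [Finset.mem_singleton]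
          exact Prod.ext hq1 hq2
    calc (D.filter (fun p => w p = g)).card ≤ ({p₀, p₀.swap} : Finset _).card :=
          Finset.card_le_card hsub
      _ ≤ 2 := Finset.card_insert_le _ _ |>.trans (by simp)
  have hDub : D.card ≤ 2 * W.card := Finset.card_le_mul_card_image D 2 hfiber
  -- vertex set
  set U : Finset V := T.biUnion (fun e => Finset.univ.filter (· ∈ e)) with hU
  have hUcard : U.card ≤ 2 * T.card := by
    calc U.card ≤ ∑ e ∈ T, (Finset.univ.filter (· ∈ e)).card := Finset.card_biUnion_le
      _ ≤ ∑ _e ∈ T, 2 := by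
          refine Finset.sum_le_sum (fun e _ => ?_)
          induction e using Sym2.ind with
          | _ x y =>
            refine le_trans (Finset.card_le_card (fun v hv => ?_)) (Finset.card_insert_le x {y} |>.trans (by simp))
            rw [Finset.mem_filter, Sym2.mem_iff] at hv
            rcases hv.2 with h | h <;> simp [h]
      _ = 2 * T.card := by simp [mul_comm]
  -- subgraph
  set H : G.Subgraph :=
    { verts := ↑U
      Adj := fun v u => G.Adj v u ∧ v ∈ U ∧ u ∈ U
      adj_sub := fun h => h.1
      edge_vert := fun h => h.2.1
      symm := ⟨fun v u h => ⟨h.1.symm, h.2.2, h.2.1⟩⟩ } with hH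
  have hmemU : ∀ v : V, ∀ e ∈ T, v ∈ e → v ∈ U := by
    intro v e he hv
    rw [hU]
    exact Finset.mem_biUnion.mpr ⟨e, he, Finset.mem_filter.mpr ⟨Finset.mem_univ v, hv⟩⟩
  have hTH : ∀ e ∈ T, e ∈ H.edgeSet := by
    intro e he
    have heG := hTE e he
    induction e using Sym2.ind with
    | _ x y =>
      rw [SimpleGraph.Subgraph.mem_edgeSet]
      exact ⟨G.mem_edgeSet.mp heG,
        hmemU x _ he (by simp), hmemU y _ he (by simp)⟩
  have hWH : ∀ g ∈ W, g ∈ H.edgeSet := by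
    intro g hgW
    obtain ⟨p, hpD, hpg⟩ := Finset.mem_image.mp hgW
    obtain ⟨hg0, ⟨u, hu1, hug⟩, ⟨v, hvg, hv2⟩⟩ := hwspec p hpD
    obtain ⟨e₀, f₀, hnep⟩ := hDmem p hpD
    rw [hpg] at hg0 hug hvg
    have huv : u ≠ v := fun h => hmatch _ e₀ _ f₀ hnep u ⟨hu1, h ▸ hv2⟩
    induction g using Sym2.ind with
    | _ x y =>
      rw [SimpleGraph.Subgraph.mem_edgeSet]
      refine ⟨G.mem_edgeSet.mp hg0, ?_, ?_⟩
      all_goals {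
        rw [Sym2.mem_iff] at hug hvg
        rcases hug with h | h <;> rcases hvg with h' | h'
        all_goals first
          | (exact h ▸ hmemU u _ e₀ hu1)
          | (exact h' ▸ hmemU v _ f₀ hv2)
          | (exact absurd (h.trans h'.symm) huv) }
  -- W disjoint from T
  have hWT : ∀ g ∈ W, g ∉ T := by
    intro g hgW hgT
    obtain ⟨p, hpD, hpg⟩ := Finset.mem_image.mp hgW
    obtain ⟨hg0, ⟨u, hu1, hug⟩, ⟨v, hvg, hv2⟩⟩ := hwspec p hpD
    obtain ⟨e₀, f₀, hnep⟩ := hDmem p hpD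
    rw [hpg] at hug hvg
    -- g shares u with p.1 and v with p.2; g ∈ T would contradict matching
    have hg1 : g = p.1 := huniq u _ hgT _ e₀ hug hu1
    have hg2 : g = p.2 := huniq v _ hgT _ f₀ hvg hv2
    exact hnep (hg1 ▸ hg2)
  -- count edges of H
  have hTW : Disjoint T W := by
    rw [Finset.disjoint_right]
    exact fun g hgW hgT => hWT g hgW hgT
  have hsubE : ↑(T ∪ W) ⊆ H.edgeSet := by
    intro g hg
    rw [Finset.coe_union, Set.mem_union] at hg
    rcases hg with hg | hg
    · exact hTH g hg
    · exact hWH g hg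
  have hEcard : T.card + W.card ≤ H.edgeSet.ncard := by
    have h1 : (T ∪ W).card = T.card + W.card := Finset.card_union_of_disjoint hTW
    have h2 : ((T ∪ W : Finset (Sym2 V)) : Set (Sym2 V)).ncard ≤ H.edgeSet.ncard :=
      Set.ncard_le_ncard hsubE (Set.toFinite _)
    rw [Set.ncard_coe_finset] at h2
    omega
  -- apply sparsity
  obtain ⟨e₀, he₀⟩ := hne
  have hVne : H.verts.Nonempty := by
    induction e₀ using Sym2.ind with
    | _ x y => exact ⟨x, by exact_mod_cast hmemU x _ he₀ (by simp)⟩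
  have hsparse := hG H hVne
  have hHV : H.verts.ncard = U.card := by rw [hH]; exact Set.ncard_coe_finset U
  rw [hHV] at hsparse
  -- final arithmetic
  have hT1 : 1 ≤ T.card := Finset.card_pos.mpr ⟨e₀, he₀⟩
  have hnat : (4*a-2) * T.card ≤ 2 * W.card := le_trans hDlb hDub
  have c1 : ((4:ℤ)*(a:ℤ) - 2) * (T.card:ℤ) ≤ 2 * (W.card:ℤ) := by
    have h := (Nat.cast_le (α := ℤ)).mpr hnat
    push_cast [Nat.cast_sub (show 2 ≤ 4*a by omega)] at h
    linarith
  have c2 : ((T.card : ℤ) + W.card) ≤ (a : ℤ) * U.card - b := by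
    have h2 : ((T.card + W.card : ℕ) : ℤ) ≤ (H.edgeSet.ncard : ℤ) := by exact_mod_cast hEcard
    push_cast at h2 ⊢
    linarith
  have c3 : ((U.card : ℤ)) ≤ 2 * T.card := by exact_mod_cast hUcard
  have hTpos : (1 : ℤ) ≤ T.card := by exact_mod_cast hT1
  have hbpos : (1 : ℤ) ≤ b := by exact_mod_cast hb
  have c4 : (a:ℤ) * U.card ≤ (a:ℤ) * (2 * T.card) :=
    mul_le_mul_of_nonneg_left c3 (by positivity)
  nlinarith [c1, c2, c4, hTpos, hbpos]

/-- If `G` is an `(a,b)`-graph with `a ≥ 1`, `b ≥ 1` (every nonempty subgraph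
`H` satisfies `|E(H)| ≤ a·|V(H)| − b`), then `χ'ₛ(G) ≤ (4a − 2)·χ'(G)`. -/
theorem stmt_12 {V : Type*} [Fintype V] (G : SimpleGraph V) (a b : ℕ)
    (ha : 1 ≤ a) (hb : 1 ≤ b)
    (hG : ∀ H : G.Subgraph, H.verts.Nonempty →
      (H.edgeSet.ncard : ℤ) ≤ (a : ℤ) * (H.verts.ncard : ℤ) - (b : ℤ)) :
    strongChromIndex G ≤ (4 * a - 2) * chromIndex G := by
  classical
  -- a proper coloring with `chromIndex G` colors exists
  have hPne : {k : ℕ | ∃ c : Sym2 V → ℕ, (∀ e ∈ G.edgeSet, c e < k) ∧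
      IsProperEdgeColoring G c}.Nonempty := by
    refine ⟨Fintype.card (Sym2 V), fun e => (Fintype.equivFin (Sym2 V) e).val, ?_, ?_⟩
    · intro e _
      exact (Fintype.equivFin (Sym2 V) e).isLt
    · intro e _ f _ hne _ hEq
      exact hne ((Fintype.equivFin (Sym2 V)).injective (Fin.val_injective hEq))
  obtain ⟨c, hcb, hcp⟩ := Nat.sInf_mem hPne
  set k := chromIndex G with hk
  -- conflict relation within color classes
  set R : Sym2 V → Sym2 V → Prop := fun e f =>
    e ∈ G.edgeSet ∧ f ∈ G.edgeSet ∧ e ≠ f ∧ c e = c f ∧ NearEdges G e f with hR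
  have hsym : ∀ e f, R e f → R f e := by
    rintro e f ⟨h1, h2, h3, h4, h5⟩
    exact ⟨h2, h1, fun h => h3 h.symm, h4.symm, nearEdges_symm G h5⟩
  -- degeneracy hypothesis
  have hdegen : ∀ T ⊆ G.edgeFinset, T.Nonempty →
      ∃ x ∈ T, ∀ N ⊆ T.erase x, (∀ y ∈ N, R x y) → N.card ≤ 4*a - 3 := by
    intro T hT hTne
    obtain ⟨e₀, he₀⟩ := hTne
    set T' : Finset (Sym2 V) := T.filter (fun f => c f = c e₀) with hT'
    have hT'T : T' ⊆ T := Finset.filter_subset _ _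
    have hT'E : ∀ e ∈ T', e ∈ G.edgeSet := fun e he =>
      SimpleGraph.mem_edgeFinset.mp (hT (hT'T he))
    have hmatch : ∀ e ∈ T', ∀ f ∈ T', e ≠ f → ∀ v, ¬(v ∈ e ∧ v ∈ f) := by
      intro e he f hf hef v ⟨hv1, hv2⟩
      have hce : c e = c e₀ := (Finset.mem_filter.mp he).2
      have hcf : c f = c e₀ := (Finset.mem_filter.mp hf).2
      exact hcp e (hT'E e he) f (hT'E f hf) hef ⟨v, hv1, hv2⟩ (hce.trans hcf.symm)
    have hT'ne : T'.Nonempty := ⟨e₀, Finset.mem_filter.mpr ⟨he₀, rfl⟩⟩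
    obtain ⟨e, heT', hdeg⟩ := count_lemma G a b ha hb hG T' hT'E hmatch hT'ne
    refine ⟨e, hT'T heT', fun N hN hNR => le_trans (Finset.card_le_card ?_) hdeg⟩
    intro f hf
    obtain ⟨hfe, hfT⟩ := Finset.mem_erase.mp (hN hf)
    obtain ⟨_, _, _, hcef, hnear⟩ := hNR f hf
    have hce : c e = c e₀ := (Finset.mem_filter.mp heT').2
    refine Finset.mem_filter.mpr ⟨Finset.mem_erase.mpr ⟨hfe, ?_⟩, hnear⟩
    exact Finset.mem_filter.mpr ⟨hfT, hcef.symm.trans hce⟩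
  obtain ⟨s, hs1, hs2⟩ := greedy R hsym (4*a - 3) G.edgeFinset hdegen
  have hm : 4*a - 3 + 1 = 4*a - 2 := by omega
  rw [hm] at hs1
  have hm2 : 0 < 4*a - 2 := by omega
  -- combined strong coloring
  set C : Sym2 V → ℕ := fun e => c e * (4*a-2) + s e with hC
  have hmem : (4*a-2) * k ∈ {k : ℕ | ∃ c : Sym2 V → ℕ,
      (∀ e ∈ G.edgeSet, c e < k) ∧ IsStrongEdgeColoring G c} := by
    refine ⟨C, ?_, ?_⟩
    · intro e he
      have h1 : c e < k := hcb e he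
      have h2 : s e < 4*a-2 := hs1 e (SimpleGraph.mem_edgeFinset.mpr he)
      calc C e = c e * (4*a-2) + s e := rfl
        _ < c e * (4*a-2) + (4*a-2) := by omega
        _ = (c e + 1) * (4*a-2) := by ring
        _ ≤ k * (4*a-2) := Nat.mul_le_mul_right _ h1
        _ = (4*a-2) * k := Nat.mul_comm _ _
    · intro e he f hf hef hnear hEq
      have h2e : s e < 4*a-2 := hs1 e (SimpleGraph.mem_edgeFinset.mpr he)
      have h2f : s f < 4*a-2 := hs1 f (SimpleGraph.mem_edgeFinset.mpr hf)
      have hce : c e = c f := by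
        have he' : C e / (4*a-2) = c e := by
          show (c e * (4*a-2) + s e) / (4*a-2) = c e
          rw [Nat.mul_comm, Nat.mul_add_div hm2, Nat.div_eq_of_lt h2e, Nat.add_zero]
        have hf' : C f / (4*a-2) = c f := by
          show (c f * (4*a-2) + s f) / (4*a-2) = c f
          rw [Nat.mul_comm, Nat.mul_add_div hm2, Nat.div_eq_of_lt h2f, Nat.add_zero]
        rw [← he', ← hf', hEq]
      have hse : s e = s f := by
        have : c e * (4*a-2) + s e = c f * (4*a-2) + s f := hEq
        rw [hce] at this
        omega
      exact hs2 e (SimpleGraph.mem_edgeFinset.mpr he) f (SimpleGraph.mem_edgeFinset.mpr hf)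
        hef ⟨he, hf, hef, hce, hnear⟩ hse
  calc strongChromIndex G ≤ (4*a-2) * k := Nat.sInf_le hmem
    _ = (4 * a - 2) * chromIndex G := by rw [hk]
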